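/- Let P be a k-plex and P_m ⊇ P ∪ {v_p} a k-plex containing P and a vertex v_p ∉ P, with P_m ⊆ P ∪ C ∪ {v_p} where C is disjoint from P ∪ {v_p}. Then |P_m ∩ ({v_p} ∪ {w ∈ C : (v_p, w) ∉ E})| ≤ sup_P(v_p), where sup_P(v_p) = k - |{x ∈ P : (v_p, x) ∉ E}|. -/

import Mathlib

open Finset

variable {V : Type*} [Fintype V] [DecidableEq V]

/-- A set `P` of vertices is a `k`-plex in `G` if every `u ∈ P` has degree at least
`|P| - k` in the induced subgraph `G[P]`, i.e. `|P| ≤ d_P(u) + k`. -/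
def SimpleGraph.IsKPlex (G : SimpleGraph V) [DecidableRel G.Adj] (k : ℕ) (P : Finset V) : Prop :=
  ∀ u ∈ P, P.card ≤ (P.filter (fun x => G.Adj u x)).card + k

theorem kplex_support_bound (G : SimpleGraph V) [DecidableRel G.Adj]
    (k : ℕ) (P Pm C : Finset V) (v_p : V) (hvp : v_p ∉ P)
    (hP : G.IsKPlex k P) (hPm : G.IsKPlex k Pm)
    (hsub : insert v_p P ⊆ Pm) (hsub2 : Pm ⊆ insert v_p (P ∪ C))
    (hdisj : Disjoint C (insert v_p P)) :
    (((Pm ∩ insert v_p (C.filter (fun w => ¬ G.Adj v_p w))).card : ℤ)) ≤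
      (k : ℤ) - ((P.filter (fun x => ¬ G.Adj v_p x)).card : ℤ) := by
  have hvPm : v_p ∈ Pm := hsub (mem_insert_self _ _)
  set N := Pm.filter (fun x => ¬ G.Adj v_p x) with hN
  -- |N| ≤ k
  have hsplit : Pm.card = (Pm.filter (fun x => G.Adj v_p x)).card + N.card :=
    (card_filter_add_card_filter_not _).symm
  have hNk : N.card ≤ k := by
    have := hPm v_p hvPm
    omega
  -- the two sets are disjoint subsets of N
  set A := P.filter (fun x => ¬ G.Adj v_p x) with hA
  set B := Pm ∩ insert v_p (C.filter (fun w => ¬ G.Adj v_p w)) with hB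
  have hAN : A ⊆ N := by
    intro x hx
    rw [hA, mem_filter] at hx
    exact mem_filter.2 ⟨hsub (mem_insert_of_mem hx.1), hx.2⟩
  have hBN : B ⊆ N := by
    intro x hx
    rw [hB, mem_inter, mem_insert] at hx
    refine mem_filter.2 ⟨hx.1, ?_⟩
    rcases hx.2 with rfl | hx2
    · exact G.irrefl
    · exact (mem_filter.1 hx2).2
  have hABdisj : Disjoint A B := by
    rw [disjoint_left]
    intro x hxA hxB
    have hxP : x ∈ P := (mem_filter.1 hxA).1
    rw [hB, mem_inter, mem_insert] at hxB
    rcases hxB.2 with rfl | hx2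
    · exact hvp hxP
    · exact (disjoint_left.1 hdisj) ((mem_filter.1 hx2).1) (mem_insert_of_mem hxP)
  have hcard : A.card + B.card ≤ N.card := by
    rw [← card_union_of_disjoint hABdisj]
    exact card_le_card (union_subset hAN hBN)
  have : A.card + B.card ≤ k := le_trans hcard hNk
  push_cast
  omega
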